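/- Sawa's moment formula for p = 1, q = 1/2: if U and V > 0 are real random variables with joint moment generating function φ(u,v) = E[e^{uU + vV}] finite for u in a neighborhood of 0 and all v ≤ 0, and E[|U|/√V] < ∞, then E[U/√V] = (1/Γ(1/2)) ∫₀^∞ v^{−1/2} (∂φ/∂u)(0, −v) dv. -/

import Mathlib

open MeasureTheory

lemma sawa_gamma_int {c : ℝ} (hc : 0 < c) :
    ∫ v in Set.Ioi (0:ℝ), v ^ (-(1:ℝ)/2) * Real.exp (-(c * v)) =
      Real.Gamma (1/2) / Real.sqrt c := by
  have h := Real.integral_rpow_mul_exp_neg_mul_Ioi (a := 1/2) (r := c) (by norm_num) hc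
  rw [show ((1:ℝ)/2 - 1) = -(1:ℝ)/2 by norm_num] at h
  rw [h, one_div, ← Real.sqrt_eq_rpow, Real.sqrt_inv]
  ring

lemma sawa_gamma_integrable {c : ℝ} (hc : 0 < c) :
    IntegrableOn (fun v : ℝ => v ^ (-(1:ℝ)/2) * Real.exp (-(c * v))) (Set.Ioi 0) := by
  have h := integrableOn_rpow_mul_exp_neg_mul_rpow (p := 1) (s := -(1:ℝ)/2) (b := c)
    (by norm_num) (by norm_num) hc
  simpa [Real.rpow_one] using h

lemma sawa_abs_mul_exp_le {δ : ℝ} (hδ : 0 < δ) (x b : ℝ) {u : ℝ} (hu : |u| ≤ δ/4) :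
    |x * Real.exp (u * x + b)| ≤
      (2/δ) * (Real.exp ((3*δ/4) * x + b) + Real.exp (-(3*δ/4) * x + b)) := by
  have hx1 : |x| ≤ (2/δ) * Real.exp ((δ/2) * |x|) := by
    have h1 : (δ/2) * |x| ≤ Real.exp ((δ/2) * |x|) := by
      have := Real.add_one_le_exp ((δ/2) * |x|); linarith
    calc |x| = (2/δ) * ((δ/2) * |x|) := by field_simp
    _ ≤ (2/δ) * Real.exp ((δ/2) * |x|) := by
        apply mul_le_mul_of_nonneg_left h1 (by positivity)
  have hx2 : Real.exp (u * x) ≤ Real.exp ((δ/4) * |x|) := by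
    apply Real.exp_le_exp.2
    calc u * x ≤ |u * x| := le_abs_self _
    _ = |u| * |x| := abs_mul _ _
    _ ≤ (δ/4) * |x| := mul_le_mul_of_nonneg_right hu (abs_nonneg _)
  have h3 : |x| * Real.exp (u * x) ≤ (2/δ) * Real.exp ((3*δ/4) * |x|) := by
    calc |x| * Real.exp (u * x)
        ≤ ((2/δ) * Real.exp ((δ/2) * |x|)) * Real.exp ((δ/4) * |x|) :=
          mul_le_mul hx1 hx2 (Real.exp_pos _).le (by positivity)
    _ = (2/δ) * Real.exp ((3*δ/4) * |x|) := by
        rw [mul_assoc, ← Real.exp_add]; ring_nf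
  have h4 : Real.exp ((3*δ/4) * |x|) ≤ Real.exp ((3*δ/4) * x) + Real.exp (-(3*δ/4) * x) := by
    rcases abs_cases x with ⟨h, _⟩ | ⟨h, _⟩
    · rw [h]; exact le_add_of_nonneg_right (Real.exp_pos _).le
    · rw [h, mul_neg, ← neg_mul]
      exact le_add_of_nonneg_left (Real.exp_pos _).le
  have h5 : |x * Real.exp (u * x + b)| = (|x| * Real.exp (u * x)) * Real.exp b := by
    rw [abs_mul, Real.abs_exp, Real.exp_add, mul_assoc]
  rw [h5]
  calc (|x| * Real.exp (u * x)) * Real.exp b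
      ≤ ((2/δ) * (Real.exp ((3*δ/4) * x) + Real.exp (-(3*δ/4) * x))) * Real.exp b := by
        apply mul_le_mul_of_nonneg_right _ (Real.exp_pos _).le
        exact h3.trans (mul_le_mul_of_nonneg_left h4 (by positivity))
  _ = (2/δ) * (Real.exp ((3*δ/4) * x + b) + Real.exp (-(3*δ/4) * x + b)) := by
        rw [Real.exp_add, Real.exp_add]; ring

/-- Sawa's moment formula for `p = 1`, `q = 1/2`: if `U` and `V > 0` have joint
m.g.f. `φ(u,v) = E[exp(uU + vV)]`, finite for `u` in a neighborhood of `0` and all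
`v ≤ 0`, and `E[|U|/√V] < ∞`, then
`E[U/√V] = (1/Γ(1/2)) ∫₀^∞ v^{−1/2} (∂φ/∂u)(0,−v) dv`. -/
theorem sawa_moment_formula
    {Ω : Type*} [MeasurableSpace Ω] (μ : Measure Ω) [IsProbabilityMeasure μ]
    (U V : Ω → ℝ) (hU : Measurable U) (hV : Measurable V)
    (hVpos : ∀ᵐ ω ∂μ, 0 < V ω)
    (φ : ℝ → ℝ → ℝ)
    (hφ : ∀ u v, φ u v = ∫ ω, Real.exp (u * U ω + v * V ω) ∂μ)
    (δ : ℝ) (hδ : 0 < δ)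
    (hmgf : ∀ u ∈ Set.Ioo (-δ) δ, ∀ v ≤ (0:ℝ),
      Integrable (fun ω => Real.exp (u * U ω + v * V ω)) μ)
    (hint : Integrable (fun ω => |U ω| / Real.sqrt (V ω)) μ)
    (φ' : ℝ → ℝ)
    (hderiv : ∀ v > (0:ℝ), HasDerivAt (fun u => φ u (-v)) (φ' v) 0) :
    ∫ ω, U ω / Real.sqrt (V ω) ∂μ =
      (1 / Real.Gamma (1/2)) *
        ∫ v in Set.Ioi (0:ℝ), v ^ (-(1:ℝ)/2) * φ' v := by
  have hC : 0 < Real.Gamma (1/2) := Real.Gamma_pos_of_pos (by norm_num)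
  set C := Real.Gamma (1/2) with hCdef
  -- Step A: identification of φ' v
  have key : ∀ v > (0:ℝ), φ' v = ∫ ω, U ω * Real.exp ((-v) * V ω) ∂μ := by
    intro v hv
    have hvle : (-v) ≤ 0 := by linarith
    have hFmeas : ∀ u : ℝ, AEStronglyMeasurable
        (fun ω => Real.exp (u * U ω + (-v) * V ω)) μ :=
      fun u => (((hU.const_mul u).add (hV.const_mul (-v))).exp).aestronglyMeasurable
    have hmem : ∀ a : ℝ, |a| ≤ 3*δ/4 → a ∈ Set.Ioo (-δ) δ := by
      intro a ha
      rcases abs_le.1 ha with ⟨h1, h2⟩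
      exact ⟨by linarith, by linarith⟩
    have hbnd_int : Integrable (fun ω =>
        (2/δ) * (Real.exp ((3*δ/4) * U ω + (-v) * V ω) +
          Real.exp (-(3*δ/4) * U ω + (-v) * V ω))) μ := by
      refine ((hmgf (3*δ/4) (hmem _ (by rw [abs_of_pos (by positivity)])) (-v) hvle).add
        (hmgf (-(3*δ/4)) (hmem _ ?_) (-v) hvle)).const_mul _
      rw [abs_neg, abs_of_pos (by positivity)]
    have h0 := hasDerivAt_integral_of_dominated_loc_of_deriv_le
      (F := fun u ω => Real.exp (u * U ω + (-v) * V ω))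
      (F' := fun u ω => U ω * Real.exp (u * U ω + (-v) * V ω))
      (x₀ := 0) (s := Metric.ball 0 (δ/4))
      (bound := fun ω => (2/δ) * (Real.exp ((3*δ/4) * U ω + (-v) * V ω) +
          Real.exp (-(3*δ/4) * U ω + (-v) * V ω)))
      (Metric.ball_mem_nhds _ (by positivity))
      (Filter.Eventually.of_forall hFmeas)
      (hmgf 0 ⟨by linarith, hδ⟩ (-v) hvle)
      ((hU.mul (((hU.const_mul 0).add (hV.const_mul (-v))).exp)).aestronglyMeasurable)
      (Filter.Eventually.of_forall fun ω => fun u hu => by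
        rw [Metric.mem_ball, Real.dist_eq, sub_zero] at hu
        exact sawa_abs_mul_exp_le hδ (U ω) ((-v) * V ω) hu.le)
      hbnd_int
      (Filter.Eventually.of_forall fun ω => fun u _ => by
        have h := (((hasDerivAt_id u).mul_const (U ω)).add_const ((-v) * V ω)).exp
        simpa [mul_comm] using h)
    have hfun : (fun u => φ u (-v)) =
        fun u => ∫ ω, Real.exp (u * U ω + (-v) * V ω) ∂μ :=
      funext fun u => hφ u (-v)
    have hd := hderiv v hv
    rw [hfun] at hd
    have := hd.unique h0.2
    simpa using this
  -- the double integrand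
  set f : ℝ → Ω → ℝ := fun v ω => v ^ (-(1:ℝ)/2) * (U ω * Real.exp (-(v * V ω))) with hfdef
  have hf_meas : AEStronglyMeasurable (Function.uncurry f)
      ((volume.restrict (Set.Ioi 0)).prod μ) := by
    apply Measurable.aestronglyMeasurable
    apply Measurable.mul
    · have hm : Measurable (fun v : ℝ => v ^ (-(1:ℝ)/2)) := by fun_prop
      exact hm.comp measurable_fst
    · exact (hU.comp measurable_snd).mul
        (((measurable_fst.mul (hV.comp measurable_snd)).neg).exp)
  -- a.e. ω : integrability in v and the value
  have h_ae : ∀ᵐ ω ∂μ, IntegrableOn (fun v => f v ω) (Set.Ioi 0) ∧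
      (∫ v in Set.Ioi (0:ℝ), ‖f v ω‖) = |U ω| * (C / Real.sqrt (V ω)) ∧
      (∫ v in Set.Ioi (0:ℝ), f v ω) = U ω * (C / Real.sqrt (V ω)) := by
    filter_upwards [hVpos] with ω hω
    have hcongr : (fun v => f v ω) =
        fun v => U ω * (v ^ (-(1:ℝ)/2) * Real.exp (-(V ω * v))) := by
      funext v; simp only [hfdef, mul_comm v (V ω)]; ring
    have hInt : IntegrableOn (fun v => f v ω) (Set.Ioi 0) := by
      rw [hcongr]; exact (sawa_gamma_integrable hω).const_mul _
    refine ⟨hInt, ?_, ?_⟩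
    · have : ∀ v ∈ Set.Ioi (0:ℝ), ‖f v ω‖ =
          |U ω| * (v ^ (-(1:ℝ)/2) * Real.exp (-(V ω * v))) := by
        intro v hv
        have hv0 : (0:ℝ) ≤ v ^ (-(1:ℝ)/2) := Real.rpow_nonneg (le_of_lt hv) _
        rw [hfdef]
        simp only [Real.norm_eq_abs, abs_mul, Real.abs_exp,
          abs_of_nonneg hv0, mul_comm v (V ω)]
        ring
      rw [setIntegral_congr_fun measurableSet_Ioi this, integral_const_mul,
        sawa_gamma_int hω]
    · rw [hcongr, integral_const_mul, sawa_gamma_int hω]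
  -- product integrability
  have hprod : Integrable (Function.uncurry f) ((volume.restrict (Set.Ioi 0)).prod μ) := by
    rw [integrable_prod_iff' hf_meas]
    constructor
    · filter_upwards [h_ae] with ω hω; exact hω.1
    · apply Integrable.congr (hint.const_mul C)
      filter_upwards [h_ae] with ω hω
      show C * (|U ω| / Real.sqrt (V ω)) = ∫ v in Set.Ioi (0:ℝ), ‖f v ω‖
      rw [hω.2.1]; ring
  have hswap := integral_integral_swap hprod
  -- compute the RHS inner integral
  have hRHS : (∫ v in Set.Ioi (0:ℝ), v ^ (-(1:ℝ)/2) * φ' v) =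
      ∫ v in Set.Ioi (0:ℝ), ∫ ω, f v ω ∂μ := by
    apply setIntegral_congr_fun measurableSet_Ioi
    intro v hv
    show v ^ (-(1:ℝ)/2) * φ' v = ∫ ω, f v ω ∂μ
    rw [key v hv, ← integral_const_mul]
    congr 1; funext ω; rw [hfdef]; simp only [neg_mul]
  -- compute the LHS
  have hLHS : (∫ ω, (∫ v in Set.Ioi (0:ℝ), f v ω) ∂μ) =
      C * ∫ ω, U ω / Real.sqrt (V ω) ∂μ := by
    rw [← integral_const_mul]
    apply integral_congr_ae
    filter_upwards [h_ae] with ω hω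
    rw [hω.2.2]; ring
  rw [hRHS, hswap, hLHS]
  field_simp
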